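/- Let L be a Lie algebra and r = Σᵢ (aᵢ⊗bᵢ − bᵢ⊗aᵢ) ∈ L⊗L. Set Δ = Δ_r, Δ(x) = x·r (adjoint diagonal action). Then for every x ∈ L, (1 + ξ + ξ²)∘(1⊗Δ)∘Δ(x) = x·c(r), where ξ cyclically permutes L⊗L⊗L and c(r) = [r¹²,r¹³] + [r¹²,r²³] + [r¹³,r²³]. -/

import Mathlib

open TensorProduct

/-- The cyclic permutation `ξ : L⊗L⊗L → L⊗L⊗L`, `x₁⊗x₂⊗x₃ ↦ x₂⊗x₃⊗x₁`. -/
noncomputable def cyclicPerm (F L : Type*) [Field F] [AddCommGroup L] [Module F L] :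
    L ⊗[F] (L ⊗[F] L) →ₗ[F] L ⊗[F] (L ⊗[F] L) :=
  (TensorProduct.assoc F L L L).toLinearMap ∘ₗ
    (TensorProduct.comm F L (L ⊗[F] L)).toLinearMap

/-- The coboundary map `Δ_r : L → L ⊗ L`, `x ↦ x · r` (adjoint diagonal action),
as a linear map. -/
noncomputable def coboundaryDelta (F : Type*) {L : Type*} [Field F]
    [LieRing L] [LieAlgebra F L] (r : L ⊗[F] L) : L →ₗ[F] L ⊗[F] L :=
  (LieModule.toEnd F L (L ⊗[F] L)).flip r

/-- `c(r) = [r¹²,r¹³] + [r¹²,r²³] + [r¹³,r²³]` for `r = Σᵢ pᵢ ⊗ qᵢ`. -/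
noncomputable def cYB {F L : Type*} [Field F] [LieRing L] [LieAlgebra F L]
    {ι : Type*} [Fintype ι] (p q : ι → L) : L ⊗[F] (L ⊗[F] L) :=
  ∑ i, ∑ j, (⁅p i, p j⁆ ⊗ₜ[F] (q i ⊗ₜ[F] q j)
    + p i ⊗ₜ[F] (⁅q i, p j⁆ ⊗ₜ[F] q j)
    + p i ⊗ₜ[F] (p j ⊗ₜ[F] ⁅q i, q j⁆))

section Helpers

variable {F L : Type*} [Field F] [LieRing L] [LieAlgebra F L]

lemma lie_sum' {L M : Type*} [LieRing L] [AddCommGroup M] [LieRingModule L M]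
    {κ : Type*} (s : Finset κ) (x : L) (f : κ → M) :
    ⁅x, ∑ k ∈ s, f k⁆ = ∑ k ∈ s, ⁅x, f k⁆ := by
  induction s using Finset.cons_induction with
  | empty => simp
  | cons a s ha ih => simp [Finset.sum_cons, lie_add, ih]

lemma cyclicPerm_tmul (u v w : L) :
    cyclicPerm F L (u ⊗ₜ[F] (v ⊗ₜ[F] w)) = v ⊗ₜ[F] (w ⊗ₜ[F] u) := rfl

lemma coboundaryDelta_apply (r : L ⊗[F] L) (x : L) :
    coboundaryDelta F r x = ⁅x, r⁆ := rfl

lemma neg_sum_sum {K : Type*} [Fintype K] {M : Type*} [AddCommGroup M] (f : K → K → M) :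
    (- ∑ k : K, ∑ l : K, f k l) = ∑ k : K, ∑ l : K, - f k l := by
  simp [Finset.sum_neg_distrib]

/-- The key skew-symmetry reindexing lemma. -/
lemma sum_swap_skew {ι : Type*} [Fintype ι] {M : Type*} [AddCommGroup M]
    (a b : ι → L) (f : L → L → M)
    (h1 : ∀ u v, f (-u) v = - f u v) (h2 : ∀ u v, f u (-v) = - f u v) :
    ∑ k : ι ⊕ ι, f (Sum.elim a (fun i => - b i) k) (Sum.elim b a k)
      = - ∑ k : ι ⊕ ι, f (Sum.elim b a k) (Sum.elim a (fun i => - b i) k) := by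
  simp only [Fintype.sum_sum_type, Sum.elim_inl, Sum.elim_inr, h1, h2,
    Finset.sum_neg_distrib, neg_add_rev, neg_neg]

/-- The core combinatorial identity. -/
lemma key {K : Type*} [Fintype K] (p q : K → L) (x : L)
    (hswap : ∀ f : L → L → L ⊗[F] (L ⊗[F] L),
      (∀ u v, f (-u) v = - f u v) → (∀ u v, f u (-v) = - f u v) →
      ∑ k : K, f (p k) (q k) = - ∑ k : K, f (q k) (p k)) :
    (∑ k : K, ∑ l : K,
      (⁅x, p k⁆ ⊗ₜ[F] (⁅q k, p l⁆ ⊗ₜ[F] q l)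
      + ⁅x, p k⁆ ⊗ₜ[F] (p l ⊗ₜ[F] ⁅q k, q l⁆)
      + p k ⊗ₜ[F] (⁅⁅x, q k⁆, p l⁆ ⊗ₜ[F] q l)
      + p k ⊗ₜ[F] (p l ⊗ₜ[F] ⁅⁅x, q k⁆, q l⁆)
      + ⁅q k, p l⁆ ⊗ₜ[F] (q l ⊗ₜ[F] ⁅x, p k⁆)
      + p l ⊗ₜ[F] (⁅q k, q l⁆ ⊗ₜ[F] ⁅x, p k⁆)
      + ⁅⁅x, q k⁆, p l⁆ ⊗ₜ[F] (q l ⊗ₜ[F] p k)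
      + p l ⊗ₜ[F] (⁅⁅x, q k⁆, q l⁆ ⊗ₜ[F] p k)
      + q l ⊗ₜ[F] (⁅x, p k⁆ ⊗ₜ[F] ⁅q k, p l⁆)
      + ⁅q k, q l⁆ ⊗ₜ[F] (⁅x, p k⁆ ⊗ₜ[F] p l)
      + q l ⊗ₜ[F] (p k ⊗ₜ[F] ⁅⁅x, q k⁆, p l⁆)
      + ⁅⁅x, q k⁆, q l⁆ ⊗ₜ[F] (p k ⊗ₜ[F] p l)))
    = ⁅x, cYB (F := F) p q⁆ := by
  have sgn : ∀ (f : L → L → L ⊗[F] (L ⊗[F] L)), True := fun _ => trivial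
  have hrhs : ⁅x, cYB (F := F) p q⁆ = ∑ k : K, ∑ l : K,
      (⁅x, ⁅p k, p l⁆⁆ ⊗ₜ[F] (q k ⊗ₜ[F] q l)
      + ⁅p k, p l⁆ ⊗ₜ[F] (⁅x, q k⁆ ⊗ₜ[F] q l)
      + ⁅p k, p l⁆ ⊗ₜ[F] (q k ⊗ₜ[F] ⁅x, q l⁆)
      + ⁅x, p k⁆ ⊗ₜ[F] (⁅q k, p l⁆ ⊗ₜ[F] q l)
      + p k ⊗ₜ[F] (⁅x, ⁅q k, p l⁆⁆ ⊗ₜ[F] q l)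
      + p k ⊗ₜ[F] (⁅q k, p l⁆ ⊗ₜ[F] ⁅x, q l⁆)
      + ⁅x, p k⁆ ⊗ₜ[F] (p l ⊗ₜ[F] ⁅q k, q l⁆)
      + p k ⊗ₜ[F] (⁅x, p l⁆ ⊗ₜ[F] ⁅q k, q l⁆)
      + p k ⊗ₜ[F] (p l ⊗ₜ[F] ⁅x, ⁅q k, q l⁆⁆)) := by
    rw [cYB, lie_sum']
    refine Finset.sum_congr rfl fun k _ => ?_
    rw [lie_sum']
    refine Finset.sum_congr rfl fun l _ => ?_
    simp only [lie_add, TensorProduct.LieModule.lie_tmul_right, tmul_add]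
    abel
  have hA1 : (∑ k : K, ∑ l : K, ⁅⁅x, q k⁆, p l⁆ ⊗ₜ[F] (q l ⊗ₜ[F] p k))
      = - ∑ k : K, ∑ l : K, ⁅⁅x, p l⁆, p k⁆ ⊗ₜ[F] (q k ⊗ₜ[F] q l) := by
    have h := hswap (fun u v => ∑ l : K, ⁅⁅x, v⁆, p l⁆ ⊗ₜ[F] (q l ⊗ₜ[F] u))
      (fun u v => by rw [← Finset.sum_neg_distrib]; exact Finset.sum_congr rfl fun l _ => by simp only [neg_lie, lie_neg, neg_tmul, tmul_neg, neg_neg])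
      (fun u v => by rw [← Finset.sum_neg_distrib]; exact Finset.sum_congr rfl fun l _ => by simp only [neg_lie, lie_neg, neg_tmul, tmul_neg, neg_neg])
    rw [h, Finset.sum_comm]
  have hA2 : (∑ k : K, ∑ l : K, ⁅⁅x, q k⁆, q l⁆ ⊗ₜ[F] (p k ⊗ₜ[F] p l))
      = ∑ k : K, ∑ l : K, ⁅⁅x, p k⁆, p l⁆ ⊗ₜ[F] (q k ⊗ₜ[F] q l) := by
    have h1 := hswap (fun u v => ∑ l : K, ⁅⁅x, v⁆, q l⁆ ⊗ₜ[F] (u ⊗ₜ[F] p l))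
      (fun u v => by rw [← Finset.sum_neg_distrib]; exact Finset.sum_congr rfl fun l _ => by simp only [neg_lie, lie_neg, neg_tmul, tmul_neg, neg_neg])
      (fun u v => by rw [← Finset.sum_neg_distrib]; exact Finset.sum_congr rfl fun l _ => by simp only [neg_lie, lie_neg, neg_tmul, tmul_neg, neg_neg])
    rw [h1, Finset.sum_comm]
    have h2 := hswap (fun u v => ∑ l : K, ⁅⁅x, p l⁆, v⁆ ⊗ₜ[F] (q l ⊗ₜ[F] u))
      (fun u v => by rw [← Finset.sum_neg_distrib]; exact Finset.sum_congr rfl fun l _ => by simp only [neg_lie, lie_neg, neg_tmul, tmul_neg, neg_neg])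
      (fun u v => by rw [← Finset.sum_neg_distrib]; exact Finset.sum_congr rfl fun l _ => by simp only [neg_lie, lie_neg, neg_tmul, tmul_neg, neg_neg])
    rw [h2, neg_neg, Finset.sum_comm]
  have hA : (∑ k : K, ∑ l : K, ⁅⁅x, q k⁆, p l⁆ ⊗ₜ[F] (q l ⊗ₜ[F] p k))
      + (∑ k : K, ∑ l : K, ⁅⁅x, q k⁆, q l⁆ ⊗ₜ[F] (p k ⊗ₜ[F] p l))
      = ∑ k : K, ∑ l : K, ⁅x, ⁅p k, p l⁆⁆ ⊗ₜ[F] (q k ⊗ₜ[F] q l) := by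
    rw [hA1, hA2, neg_add_eq_sub]
    simp only [← Finset.sum_sub_distrib]
    refine Finset.sum_congr rfl fun k _ => Finset.sum_congr rfl fun l _ => ?_
    rw [leibniz_lie, ← lie_skew (p k) ⁅x, p l⁆, add_tmul, neg_tmul, sub_eq_add_neg]
  have hB : (∑ k : K, ∑ l : K, ⁅q k, p l⁆ ⊗ₜ[F] (q l ⊗ₜ[F] ⁅x, p k⁆))
      = ∑ k : K, ∑ l : K, ⁅p k, p l⁆ ⊗ₜ[F] (q k ⊗ₜ[F] ⁅x, q l⁆) := by
    have h := hswap (fun u v => ∑ l : K, ⁅v, p l⁆ ⊗ₜ[F] (q l ⊗ₜ[F] ⁅x, u⁆)) (fun u v => by rw [← Finset.sum_neg_distrib]; exact Finset.sum_congr rfl fun l _ => by simp only [neg_lie, lie_neg, neg_tmul, tmul_neg, neg_neg]) (fun u v => by rw [← Finset.sum_neg_distrib]; exact Finset.sum_congr rfl fun l _ => by simp only [neg_lie, lie_neg, neg_tmul, tmul_neg, neg_neg])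
    rw [h, Finset.sum_comm, neg_sum_sum]
    exact Finset.sum_congr rfl fun k _ => Finset.sum_congr rfl fun l _ => by
      rw [← neg_tmul, lie_skew]
  have hC : (∑ k : K, ∑ l : K, p l ⊗ₜ[F] (⁅q k, q l⁆ ⊗ₜ[F] ⁅x, p k⁆))
      = ∑ k : K, ∑ l : K, p k ⊗ₜ[F] (⁅q k, p l⁆ ⊗ₜ[F] ⁅x, q l⁆) := by
    have h := hswap (fun u v => ∑ l : K, p l ⊗ₜ[F] (⁅v, q l⁆ ⊗ₜ[F] ⁅x, u⁆)) (fun u v => by rw [← Finset.sum_neg_distrib]; exact Finset.sum_congr rfl fun l _ => by simp only [neg_lie, lie_neg, neg_tmul, tmul_neg, neg_neg]) (fun u v => by rw [← Finset.sum_neg_distrib]; exact Finset.sum_congr rfl fun l _ => by simp only [neg_lie, lie_neg, neg_tmul, tmul_neg, neg_neg])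
    rw [h, Finset.sum_comm, neg_sum_sum]
    exact Finset.sum_congr rfl fun k _ => Finset.sum_congr rfl fun l _ => by
      rw [← tmul_neg, ← neg_tmul, lie_skew]
  have hD : (∑ k : K, ∑ l : K, q l ⊗ₜ[F] (⁅x, p k⁆ ⊗ₜ[F] ⁅q k, p l⁆))
      = ∑ k : K, ∑ l : K, p k ⊗ₜ[F] (⁅x, p l⁆ ⊗ₜ[F] ⁅q k, q l⁆) := by
    rw [Finset.sum_comm]
    have h := hswap (fun u v => ∑ l : K, v ⊗ₜ[F] (⁅x, p l⁆ ⊗ₜ[F] ⁅q l, u⁆)) (fun u v => by rw [← Finset.sum_neg_distrib]; exact Finset.sum_congr rfl fun l _ => by simp only [neg_lie, lie_neg, neg_tmul, tmul_neg, neg_neg]) (fun u v => by rw [← Finset.sum_neg_distrib]; exact Finset.sum_congr rfl fun l _ => by simp only [neg_lie, lie_neg, neg_tmul, tmul_neg, neg_neg])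
    rw [h, neg_sum_sum]
    exact Finset.sum_congr rfl fun k _ => Finset.sum_congr rfl fun l _ => by
      rw [← tmul_neg, ← tmul_neg, lie_skew]
  have hE : (∑ k : K, ∑ l : K, ⁅q k, q l⁆ ⊗ₜ[F] (⁅x, p k⁆ ⊗ₜ[F] p l))
      = ∑ k : K, ∑ l : K, ⁅p k, p l⁆ ⊗ₜ[F] (⁅x, q k⁆ ⊗ₜ[F] q l) := by
    have h1 := hswap (fun u v => ∑ l : K, ⁅v, q l⁆ ⊗ₜ[F] (⁅x, u⁆ ⊗ₜ[F] p l)) (fun u v => by rw [← Finset.sum_neg_distrib]; exact Finset.sum_congr rfl fun l _ => by simp only [neg_lie, lie_neg, neg_tmul, tmul_neg, neg_neg]) (fun u v => by rw [← Finset.sum_neg_distrib]; exact Finset.sum_congr rfl fun l _ => by simp only [neg_lie, lie_neg, neg_tmul, tmul_neg, neg_neg])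
    rw [h1, Finset.sum_comm]
    have h2 := hswap (fun u v => ∑ l : K, ⁅p l, v⁆ ⊗ₜ[F] (⁅x, q l⁆ ⊗ₜ[F] u)) (fun u v => by rw [← Finset.sum_neg_distrib]; exact Finset.sum_congr rfl fun l _ => by simp only [neg_lie, lie_neg, neg_tmul, tmul_neg, neg_neg]) (fun u v => by rw [← Finset.sum_neg_distrib]; exact Finset.sum_congr rfl fun l _ => by simp only [neg_lie, lie_neg, neg_tmul, tmul_neg, neg_neg])
    rw [h2, neg_neg, Finset.sum_comm]
  have hF : (∑ k : K, ∑ l : K, p l ⊗ₜ[F] (⁅⁅x, q k⁆, q l⁆ ⊗ₜ[F] p k))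
      = ∑ k : K, ∑ l : K, p k ⊗ₜ[F] (⁅q k, ⁅x, p l⁆⁆ ⊗ₜ[F] q l) := by
    have h := hswap (fun u v => ∑ l : K, p l ⊗ₜ[F] (⁅⁅x, v⁆, q l⁆ ⊗ₜ[F] u)) (fun u v => by rw [← Finset.sum_neg_distrib]; exact Finset.sum_congr rfl fun l _ => by simp only [neg_lie, lie_neg, neg_tmul, tmul_neg, neg_neg]) (fun u v => by rw [← Finset.sum_neg_distrib]; exact Finset.sum_congr rfl fun l _ => by simp only [neg_lie, lie_neg, neg_tmul, tmul_neg, neg_neg])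
    rw [h, Finset.sum_comm, neg_sum_sum]
    exact Finset.sum_congr rfl fun k _ => Finset.sum_congr rfl fun l _ => by
      rw [← tmul_neg, ← neg_tmul, lie_skew]
  have hG : (∑ k : K, ∑ l : K, q l ⊗ₜ[F] (p k ⊗ₜ[F] ⁅⁅x, q k⁆, p l⁆))
      = ∑ k : K, ∑ l : K, p k ⊗ₜ[F] (p l ⊗ₜ[F] ⁅q k, ⁅x, q l⁆⁆) := by
    rw [Finset.sum_comm]
    have h := hswap (fun u v => ∑ l : K, v ⊗ₜ[F] (p l ⊗ₜ[F] ⁅⁅x, q l⁆, u⁆)) (fun u v => by rw [← Finset.sum_neg_distrib]; exact Finset.sum_congr rfl fun l _ => by simp only [neg_lie, lie_neg, neg_tmul, tmul_neg, neg_neg]) (fun u v => by rw [← Finset.sum_neg_distrib]; exact Finset.sum_congr rfl fun l _ => by simp only [neg_lie, lie_neg, neg_tmul, tmul_neg, neg_neg])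
    rw [h, neg_sum_sum]
    exact Finset.sum_congr rfl fun k _ => Finset.sum_congr rfl fun l _ => by
      rw [← tmul_neg, ← tmul_neg, lie_skew]
  have hsplit1 : (∑ k : K, ∑ l : K, p k ⊗ₜ[F] (⁅x, ⁅q k, p l⁆⁆ ⊗ₜ[F] q l))
      = (∑ k : K, ∑ l : K, p k ⊗ₜ[F] (⁅⁅x, q k⁆, p l⁆ ⊗ₜ[F] q l))
        + ∑ k : K, ∑ l : K, p k ⊗ₜ[F] (⁅q k, ⁅x, p l⁆⁆ ⊗ₜ[F] q l) := by
    simp only [← Finset.sum_add_distrib]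
    exact Finset.sum_congr rfl fun k _ => Finset.sum_congr rfl fun l _ => by
      rw [leibniz_lie, add_tmul, tmul_add]
  have hsplit2 : (∑ k : K, ∑ l : K, p k ⊗ₜ[F] (p l ⊗ₜ[F] ⁅x, ⁅q k, q l⁆⁆))
      = (∑ k : K, ∑ l : K, p k ⊗ₜ[F] (p l ⊗ₜ[F] ⁅⁅x, q k⁆, q l⁆))
        + ∑ k : K, ∑ l : K, p k ⊗ₜ[F] (p l ⊗ₜ[F] ⁅q k, ⁅x, q l⁆⁆) := by
    simp only [← Finset.sum_add_distrib]
    exact Finset.sum_congr rfl fun k _ => Finset.sum_congr rfl fun l _ => by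
      rw [leibniz_lie, tmul_add, tmul_add]
  rw [hrhs]
  simp only [Finset.sum_add_distrib]
  rw [hsplit1, hsplit2, ← hA, ← hB, ← hC, ← hD, ← hE, ← hF, ← hG]
  abel

end Helpers

/-- For `r = Σᵢ (aᵢ⊗bᵢ - bᵢ⊗aᵢ)` and `Δ = Δ_r`, we have
`(1 + ξ + ξ²) ∘ (1 ⊗ Δ) ∘ Δ (x) = x · c(r)` for every `x ∈ L`. -/
theorem witt_bialg_stmt3 {F L : Type*} [Field F] [CharZero F]
    [LieRing L] [LieAlgebra F L] {ι : Type*} [Fintype ι] (a b : ι → L)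
    (r : L ⊗[F] L) (hr : r = ∑ i, (a i ⊗ₜ[F] b i - b i ⊗ₜ[F] a i)) :
    ∀ x : L,
      ((LinearMap.id : L ⊗[F] (L ⊗[F] L) →ₗ[F] L ⊗[F] (L ⊗[F] L)) + cyclicPerm F L
        + cyclicPerm F L ∘ₗ cyclicPerm F L)
        (LinearMap.lTensor L (coboundaryDelta F r) (coboundaryDelta F r x))
      = ⁅x, cYB (F := F) (Sum.elim a (fun i => - b i)) (Sum.elim b a)⁆ := by
  intro x
  have hr' : r = ∑ k : ι ⊕ ι, (Sum.elim a (fun i => - b i) k) ⊗ₜ[F] (Sum.elim b a k) := by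
    rw [hr, Fintype.sum_sum_type]
    simp [neg_tmul, sub_eq_add_neg, Finset.sum_add_distrib]
  set p : ι ⊕ ι → L := Sum.elim a (fun i => - b i) with hp
  set q : ι ⊕ ι → L := Sum.elim b a with hq
  have hswap : ∀ f : L → L → L ⊗[F] (L ⊗[F] L),
      (∀ u v, f (-u) v = - f u v) → (∀ u v, f u (-v) = - f u v) →
      ∑ k : ι ⊕ ι, f (p k) (q k) = - ∑ k : ι ⊕ ι, f (q k) (p k) := by
    intro f h1 h2
    rw [hp, hq]
    exact sum_swap_skew a b f h1 h2
  have hDx : ∀ y : L, coboundaryDelta F r y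
      = ∑ k : ι ⊕ ι, (⁅y, p k⁆ ⊗ₜ[F] q k + p k ⊗ₜ[F] ⁅y, q k⁆) := by
    intro y
    rw [coboundaryDelta_apply, hr', lie_sum']
    simp
  refine Eq.trans ?_ (key p q x hswap)
  rw [hDx x, map_sum, map_sum]
  refine Finset.sum_congr rfl fun k _ => ?_
  rw [map_add, LinearMap.lTensor_tmul, LinearMap.lTensor_tmul]
  simp only [hDx]
  rw [tmul_sum, tmul_sum, ← Finset.sum_add_distrib, map_sum]
  refine Finset.sum_congr rfl fun l _ => ?_
  simp only [tmul_add, LinearMap.add_apply, LinearMap.comp_apply, LinearMap.id_apply,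
    map_add, cyclicPerm_tmul]
  abel
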